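/- Let x be either the relativistic map x_R(y) = −e^{−y} or the CGHS map x_C(y) = −log(1 + e^{−y}). Let f be a normalized outgoing wave function with N̄_o[f] < ∞, and let g_cl be the classical incoming function, i.e. the function whose Fourier transform is ĝ_cl(k) = F̌(k)/‖Af̃‖ for k > 0 and 0 for k ≤ 0, where ‖Af̃‖² = ∫_0^∞ |F̌(k)|²/(2k) dk. Then 1 + N̄_o[f] ≤ N̄_{g_cl}[f]. -/

import Mathlib

open MeasureTheory Set Filter
open scoped ENNReal

/-- The Fourier transform `f̂(p) = (2π)^{-1/2} ∫ f(y) e^{-ipy} dy`. -/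
noncomputable def ft (f : ℝ → ℂ) (p : ℝ) : ℂ :=
  (Real.sqrt (2 * Real.pi) : ℂ)⁻¹ *
    ∫ y : ℝ, f y * Complex.exp (-Complex.I * (p : ℂ) * (y : ℂ))

/-- `F̌(k) = (2π)^{-1/2} ∫ f(y) e^{-ik x(y)} dy`. -/
noncomputable def Fk (x : ℝ → ℝ) (f : ℝ → ℂ) (k : ℝ) : ℂ :=
  (Real.sqrt (2 * Real.pi) : ℂ)⁻¹ *
    ∫ y : ℝ, f y * Complex.exp (-Complex.I * (k : ℂ) * (x y : ℂ))

/-- The relativistic black-hole coordinate map `x_R(y) = -e^{-y}`. -/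
noncomputable def xR (y : ℝ) : ℝ := -Real.exp (-y)

/-- The CGHS black-hole coordinate map `x_C(y) = -log(1+e^{-y})`. -/
noncomputable def xC (y : ℝ) : ℝ := -Real.log (1 + Real.exp (-y))

/-- The mean number of spontaneously created particles `N̄_o[f]`. -/
noncomputable def No (x : ℝ → ℝ) (f : ℝ → ℂ) : ℝ≥0∞ :=
  ∫⁻ k in Set.Ioi (0:ℝ), ENNReal.ofReal (‖Fk x f (-k)‖ ^ 2 / (2 * k))

/-- The thermal mean particle number `N̄^Th_β[f]` at inverse temperature `β`. -/
noncomputable def Nth (β : ℝ) (f : ℝ → ℂ) : ℝ≥0∞ :=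
  ∫⁻ p in Set.Ioi (0:ℝ),
    ENNReal.ofReal (‖ft f p‖ ^ 2 / (2 * p * (Real.exp (β * p) - 1)))

/-- translate of `f` by `y₀`. -/
noncomputable def tr (f : ℝ → ℂ) (y₀ : ℝ) : ℝ → ℂ := fun y => f (y - y₀)

/-- `‖Af̃‖ = (∫_0^∞ |F̌(k)|²/(2k) dk)^{1/2}`. -/
noncomputable def normA (x : ℝ → ℝ) (f : ℝ → ℂ) : ℝ :=
  Real.sqrt (∫ k in Set.Ioi (0:ℝ), ‖Fk x f k‖ ^ 2 / (2 * k))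

/-- The Fourier transform of the classical incoming function:
`ĝ_cl(k) = F̌(k)/‖Af̃‖` for `k > 0` and `0` for `k ≤ 0`. -/
noncomputable def gclhat (x : ℝ → ℝ) (f : ℝ → ℂ) (k : ℝ) : ℂ :=
  if 0 < k then Fk x f k / ((normA x f : ℝ) : ℂ) else 0

lemma integral_cexp_Ioi (c : ℂ) (hc : c.re < 0) :
    ∫ k : ℝ in Ioi (0:ℝ), Complex.exp (c * k) = -c⁻¹ := by
  have hc0 : c ≠ 0 := fun h => by simp [h] at hc
  have hint : IntegrableOn (fun k : ℝ => Complex.exp (c * k)) (Ioi 0) := by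
    apply Integrable.mono' (g := fun k : ℝ => Real.exp (c.re * k))
      ((exp_neg_integrableOn_Ioi 0 (b := -c.re) (by linarith)).congr_fun
        (fun k _ => by ring_nf) measurableSet_Ioi)
    · exact (Complex.continuous_exp.comp (continuous_const.mul Complex.continuous_ofReal)).aestronglyMeasurable
    · filter_upwards with k
      rw [Complex.norm_exp]
      simp
  have hderiv : ∀ k ∈ Ici (0:ℝ), HasDerivAt (fun k : ℝ => Complex.exp (c * k) / c)
      (Complex.exp (c * k)) k := by
    intro k _
    have h1 : HasDerivAt (fun k : ℝ => Complex.exp (c * k)) (Complex.exp (c * k) * c) k := by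
      have h2 : HasDerivAt (fun k : ℝ => c * (k:ℂ)) c k := by
        simpa using (Complex.ofRealCLM.hasDerivAt (x := k)).const_mul c
      simpa using h2.cexp
    simpa [mul_div_assoc, mul_div_cancel_right₀ _ hc0] using h1.div_const c
  have htend : Tendsto (fun k : ℝ => Complex.exp (c * k) / c) atTop (nhds 0) := by
    rw [tendsto_zero_iff_norm_tendsto_zero]
    have h3 : Tendsto (fun k : ℝ => Real.exp (c.re * k) / ‖c‖) atTop (nhds 0) := by
      have h4 : Tendsto (fun k : ℝ => c.re * k) atTop atBot :=
        tendsto_id.const_mul_atTop_of_neg hc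
      simpa using (Real.tendsto_exp_atBot.comp h4).div_const ‖c‖
    refine h3.congr fun k => ?_
    simp [norm_div, Complex.norm_exp]
  have := integral_Ioi_of_hasDerivAt_of_tendsto' hderiv hint htend
  rw [this]
  simp [neg_div, div_eq_inv_mul]

lemma integrable_cexp_Ioi (c : ℂ) (hc : c.re < 0) :
    IntegrableOn (fun k : ℝ => Complex.exp (c * k)) (Ioi 0) := by
  apply Integrable.mono' (g := fun k : ℝ => Real.exp (c.re * k))
    ((exp_neg_integrableOn_Ioi 0 (b := -c.re) (by linarith)).congr_fun
      (fun k _ => by ring_nf) measurableSet_Ioi)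
  · exact (Complex.continuous_exp.comp (continuous_const.mul Complex.continuous_ofReal)).aestronglyMeasurable
  · filter_upwards with k
    rw [Complex.norm_exp]
    simp

lemma integral_exp_cos (a s : ℝ) (ha : 0 < a) :
    ∫ k : ℝ in Ioi (0:ℝ), Real.exp (-a*k) * Real.cos (s*k) = a / (a^2+s^2) := by
  have hc : (-a + s*Complex.I).re < 0 := by simp [ha]
  have h1 := integral_cexp_Ioi _ hc
  have h2 : ∀ k : ℝ, ((-a + s*Complex.I) * k).re = -a*k ∧ ((-a + s*Complex.I) * k).im = s*k := by
    intro k; constructor <;> simp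
  have h3 : (∫ k : ℝ in Ioi (0:ℝ), Complex.exp ((-a + s*Complex.I) * k)).re
      = ∫ k : ℝ in Ioi (0:ℝ), Real.exp (-a*k) * Real.cos (s*k) := by
    rw [show (∫ k : ℝ in Ioi (0:ℝ), Complex.exp ((-a + s*Complex.I) * k)).re = RCLike.re (∫ k : ℝ in Ioi (0:ℝ), Complex.exp ((-a + s*Complex.I) * k)) from rfl, ← integral_re (integrable_cexp_Ioi _ hc)]
    refine integral_congr_ae (Eventually.of_forall fun k => ?_)
    show (Complex.exp ((-a + s*Complex.I) * k)).re = _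
    rw [Complex.exp_re, (h2 k).1, (h2 k).2]
  rw [← h3, h1]
  have hne : Complex.normSq (-a + s*Complex.I) = a^2 + s^2 := by
    simp [Complex.normSq_apply]; ring
  rw [Complex.neg_re, Complex.inv_re, hne]
  simp [neg_div]
  try ring

lemma aesm_esd (a s : ℝ) : AEStronglyMeasurable
    (fun k : ℝ => Real.exp (-a*k) * (Real.sin (s*k)/k)) (volume.restrict (Ioi 0)) := by
  apply Measurable.aestronglyMeasurable
  have : (fun k : ℝ => Real.exp (-a*k) * (Real.sin (s*k)/k))
      = fun k : ℝ => Real.exp (-a*k) * (Real.sin (s*k) * k⁻¹) := by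
    funext k; rw [div_eq_mul_inv]
  rw [this]
  fun_prop

lemma integrable_exp_sin_div (a s : ℝ) (ha : 0 < a) :
    IntegrableOn (fun k : ℝ => Real.exp (-a*k) * (Real.sin (s*k)/k)) (Ioi 0) := by
  apply Integrable.mono' (g := fun k : ℝ => |s| * Real.exp (-a*k))
    (((exp_neg_integrableOn_Ioi 0 ha).congr_fun (fun k _ => by ring_nf) measurableSet_Ioi).const_mul |s|)
    (aesm_esd a s)
  filter_upwards [ae_restrict_mem measurableSet_Ioi] with k hk
  have hk0 : (0:ℝ) < k := hk
  rw [Real.norm_eq_abs, abs_mul, Real.abs_exp]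
  rw [mul_comm (|s|)]
  apply mul_le_mul_of_nonneg_left _ (Real.exp_pos _).le
  rw [abs_div, div_le_iff₀ (by rw [abs_of_pos hk0]; exact hk0)]
  calc |Real.sin (s*k)| ≤ |s*k| := Real.abs_sin_le_abs
  _ = |s| * |k| := abs_mul _ _

lemma integral_exp_sin_div (a : ℝ) (ha : 0 < a) (s : ℝ) :
    ∫ k : ℝ in Ioi (0:ℝ), Real.exp (-a*k) * (Real.sin (s*k)/k) = Real.arctan (s/a) := by
  set φ : ℝ → ℝ := fun s => ∫ k : ℝ in Ioi (0:ℝ), Real.exp (-a*k) * (Real.sin (s*k)/k) with hφ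
  have key : ∀ t : ℝ, HasDerivAt (fun u => φ u - Real.arctan (u/a)) 0 t := by
    intro t
    have h1 : HasDerivAt φ (a/(a^2+t^2)) t := by
      have := hasDerivAt_integral_of_dominated_loc_of_deriv_le
        (μ := volume.restrict (Ioi 0)) (x₀ := t)
        (F := fun u k => Real.exp (-a*k) * (Real.sin (u*k)/k))
        (F' := fun u k => Real.exp (-a*k) * Real.cos (u*k))
        (bound := fun k => Real.exp (-a*k)) (Metric.ball_mem_nhds t one_pos)
        (Eventually.of_forall fun u => aesm_esd a u)
        (integrable_exp_sin_div a t ha)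
        (Measurable.aestronglyMeasurable (by fun_prop))
        ?_ ((exp_neg_integrableOn_Ioi 0 ha).congr_fun (fun k _ => by ring_nf) measurableSet_Ioi) ?_
      · rw [integral_exp_cos a t ha] at this
        exact this.2
      · filter_upwards with k
        intro u _
        rw [Real.norm_eq_abs, abs_mul, Real.abs_exp]
        nlinarith [Real.abs_cos_le_one (u*k), Real.exp_pos (-a*k), abs_nonneg (Real.cos (u*k))]
      · filter_upwards [ae_restrict_mem measurableSet_Ioi] with k hk
        intro u _
        have hk0 : (k:ℝ) ≠ 0 := ne_of_gt hk
        have h2 : HasDerivAt (fun u : ℝ => Real.sin (u*k)) (Real.cos (u*k) * k) u :=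
          (hasDerivAt_mul_const k).sin
        have h3 := (h2.div_const k).const_mul (Real.exp (-a*k))
        simpa [mul_div_assoc, mul_div_cancel_right₀ _ hk0] using h3
    have h4 : HasDerivAt (fun u : ℝ => Real.arctan (u/a)) (a/(a^2+t^2)) t := by
      have h5 : HasDerivAt (fun u : ℝ => u/a) (1/a) t := by
        simpa using (hasDerivAt_id t).div_const a
      have h6 : HasDerivAt (fun u : ℝ => Real.arctan (u/a)) (1/(1+(t/a)^2) * (1/a)) t :=
        by have := (Real.hasDerivAt_arctan (t/a)).comp t h5; exact this
      convert h6 using 1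
      field_simp
    have h7 := h1.sub h4
    rw [sub_self] at h7
    exact h7
  have hconst := is_const_of_deriv_eq_zero (f := fun u => φ u - Real.arctan (u/a))
    (fun u => (key u).differentiableAt) (fun u => (key u).deriv) s 0
  have hφ0 : φ 0 = 0 := by
    rw [hφ]; simp
  rw [hφ0] at hconst
  simp only [zero_div, Real.arctan_zero, sub_zero] at hconst
  linarith [hconst]

noncomputable def Kn (n : ℕ) (k : ℝ) : ℝ :=
  (Real.exp (-((n:ℝ)+1)⁻¹ * k) - Real.exp (-((n:ℝ)+1) * k)) / (2 * k)

lemma npos (n : ℕ) : (0:ℝ) < (n:ℝ)+1 := by positivity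

lemma hNtend : Tendsto (fun n : ℕ => (n:ℝ)+1) atTop atTop :=
  tendsto_atTop_add_const_right _ 1 tendsto_natCast_atTop_atTop

lemma inv_le_self' (n : ℕ) : ((n:ℝ)+1)⁻¹ ≤ (n:ℝ)+1 := by
  have h1 : ((n:ℝ)+1)⁻¹ ≤ 1 := by
    rw [inv_le_one₀ (npos n)]; simp
  have : (1:ℝ) ≤ (n:ℝ)+1 := by simp
  linarith

lemma Kn_nonneg (n : ℕ) {k : ℝ} (hk : 0 < k) : 0 ≤ Kn n k := by
  apply div_nonneg _ (by linarith)
  rw [sub_nonneg, Real.exp_le_exp]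
  nlinarith [inv_le_self' n, hk]

lemma Kn_mono {n : ℕ} {k : ℝ} (hk : 0 < k) : Kn n k ≤ Kn (n+1) k := by
  apply div_le_div_of_nonneg_right _ (by linarith)
  apply sub_le_sub
  · rw [Real.exp_le_exp]
    have h : ((n:ℝ)+1+1)⁻¹ ≤ ((n:ℝ)+1)⁻¹ := by
      apply inv_anti₀ (npos n); linarith
    push_cast
    nlinarith [h, hk]
  · rw [Real.exp_le_exp]
    push_cast
    nlinarith [hk]

lemma Kn_le (n : ℕ) {k : ℝ} (hk : 0 < k) :
    Kn n k ≤ (((n:ℝ)+1)/2) * Real.exp (-((n:ℝ)+1)⁻¹ * k) := by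
  rw [Kn, div_le_iff₀ (by linarith)]
  have h1 : 1 - Real.exp (-(((n:ℝ)+1) - ((n:ℝ)+1)⁻¹) * k) ≤ (((n:ℝ)+1) - ((n:ℝ)+1)⁻¹) * k := by
    have := Real.add_one_le_exp (-(((n:ℝ)+1) - ((n:ℝ)+1)⁻¹) * k)
    linarith
  have h2 : Real.exp (-((n:ℝ)+1) * k) = Real.exp (-((n:ℝ)+1)⁻¹ * k) *
      Real.exp (-(((n:ℝ)+1) - ((n:ℝ)+1)⁻¹) * k) := by
    rw [← Real.exp_add]; ring_nf
  have h3 : (0:ℝ) < ((n:ℝ)+1)⁻¹ := by positivity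
  have h4 := Real.exp_pos (-((n:ℝ)+1)⁻¹ * k)
  have h5 : (((n:ℝ)+1) - ((n:ℝ)+1)⁻¹) * k ≤ ((n:ℝ)+1) * k := by nlinarith [h3, hk]
  calc Real.exp (-((n:ℝ)+1)⁻¹ * k) - Real.exp (-((n:ℝ)+1) * k)
      = Real.exp (-((n:ℝ)+1)⁻¹ * k) * (1 - Real.exp (-(((n:ℝ)+1) - ((n:ℝ)+1)⁻¹) * k)) := by
        rw [h2]; ring
    _ ≤ Real.exp (-((n:ℝ)+1)⁻¹ * k) * ((((n:ℝ)+1) - ((n:ℝ)+1)⁻¹) * k) := by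
        apply mul_le_mul_of_nonneg_left h1 h4.le
    _ ≤ Real.exp (-((n:ℝ)+1)⁻¹ * k) * (((n:ℝ)+1) * k) := by
        apply mul_le_mul_of_nonneg_left h5 h4.le
    _ = (((n:ℝ)+1)/2) * Real.exp (-((n:ℝ)+1)⁻¹ * k) * (2*k) := by ring

lemma Kn_tendsto {k : ℝ} (hk : 0 < k) :
    Tendsto (fun n : ℕ => Kn n k) atTop (nhds (1/(2*k))) := by
  have hA : Tendsto (fun n : ℕ => Real.exp (-((n:ℝ)+1)⁻¹ * k)) atTop (nhds 1) := by
    have h0 : Tendsto (fun n : ℕ => -((n:ℝ)+1)⁻¹ * k) atTop (nhds 0) := by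
      simpa using (hNtend.inv_tendsto_atTop).neg.mul_const k
    have hA' := Real.continuous_exp.continuousAt.tendsto.comp h0
    rw [Real.exp_zero] at hA'
    exact hA'
  have hB : Tendsto (fun n : ℕ => Real.exp (-((n:ℝ)+1) * k)) atTop (nhds 0) := by
    have h0 : Tendsto (fun n : ℕ => -((n:ℝ)+1) * k) atTop atBot :=
      (tendsto_neg_atTop_atBot.comp (hNtend.atTop_mul_const hk)).congr (fun n => by simp [Function.comp]; ring)
    exact Real.tendsto_exp_atBot.comp h0
  have h9 : Tendsto (fun n : ℕ => (Real.exp (-((n:ℝ)+1)⁻¹ * k) - Real.exp (-((n:ℝ)+1) * k))/(2*k))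
      atTop (nhds ((1-0)/(2*k))) := (hA.sub hB).div_const (2*k)
  rw [show ((1:ℝ)-0)/(2*k) = 1/(2*k) by norm_num] at h9
  exact h9

lemma Kn_measurable (n : ℕ) : Measurable (Kn n) := by
  unfold Kn; fun_prop

lemma Kn_integrableOn (n : ℕ) : IntegrableOn (Kn n) (Ioi 0) := by
  apply Integrable.mono' (g := fun k : ℝ => (((n:ℝ)+1)/2) * Real.exp (-((n:ℝ)+1)⁻¹ * k))
    (((exp_neg_integrableOn_Ioi 0 (by positivity : (0:ℝ) < ((n:ℝ)+1)⁻¹)).congr_fun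
      (fun k _ => by ring_nf) measurableSet_Ioi).const_mul _)
    (Kn_measurable n).aestronglyMeasurable
  filter_upwards [ae_restrict_mem measurableSet_Ioi] with k hk
  rw [Real.norm_eq_abs, abs_of_nonneg (Kn_nonneg n hk)]
  exact Kn_le n hk

noncomputable def Sn (n : ℕ) (s : ℝ) : ℝ :=
  (Real.arctan (s*((n:ℝ)+1)) - Real.arctan (s/((n:ℝ)+1)))/2

lemma integral_Kn_sin (n : ℕ) (s : ℝ) :
    ∫ k : ℝ in Ioi (0:ℝ), Kn n k * Real.sin (s*k) = Sn n s := by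
  unfold Sn
  have ha : (0:ℝ) < ((n:ℝ)+1)⁻¹ := by positivity
  have hb := npos n
  have hcong : ∀ k ∈ Ioi (0:ℝ), Kn n k * Real.sin (s*k)
      = (Real.exp (-((n:ℝ)+1)⁻¹*k) * (Real.sin (s*k)/k)
        - Real.exp (-((n:ℝ)+1)*k) * (Real.sin (s*k)/k)) / 2 := by
    intro k hk
    have : (k:ℝ) ≠ 0 := ne_of_gt hk
    rw [Kn]; field_simp
  rw [setIntegral_congr_fun measurableSet_Ioi hcong, integral_div,
    integral_sub (integrable_exp_sin_div _ s ha) (integrable_exp_sin_div _ s hb),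
    integral_exp_sin_div _ ha s, integral_exp_sin_div _ hb s,
    show s / ((n:ℝ)+1)⁻¹ = s * ((n:ℝ)+1) by field_simp]

lemma Kn_sin_tendsto (s : ℝ) :
    Tendsto (fun n : ℕ => Sn n s) atTop (nhds (Real.pi/4 * Real.sign s)) := by
  unfold Sn
  have h2 : Tendsto (fun n : ℕ => Real.arctan (s/((n:ℝ)+1))) atTop (nhds 0) := by
    have h1 : Tendsto (fun n : ℕ => s/((n:ℝ)+1)) atTop (nhds 0) :=
      Tendsto.const_div_atTop hNtend s
    simpa [Function.comp_def] using (Real.continuous_arctan.continuousAt.tendsto.comp h1)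
  rcases lt_trichotomy s 0 with hs | hs | hs
  · have h3 : Tendsto (fun n : ℕ => s*((n:ℝ)+1)) atTop atBot :=
      hNtend.const_mul_atTop_of_neg hs
    have h4 : Tendsto (fun n : ℕ => Real.arctan (s*((n:ℝ)+1))) atTop (nhds (-(Real.pi/2))) :=
      (tendsto_nhds_of_tendsto_nhdsWithin Real.tendsto_arctan_atBot).comp h3
    have := (h4.sub h2).div_const 2
    rw [Real.sign_of_neg hs,
      show Real.pi/4 * (-1:ℝ) = (-(Real.pi/2) - 0)/2 by ring]
    exact this
  · subst hs
    simp [Real.sign_zero]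
  · have h3 : Tendsto (fun n : ℕ => s*((n:ℝ)+1)) atTop atTop :=
      hNtend.const_mul_atTop hs
    have h4 : Tendsto (fun n : ℕ => Real.arctan (s*((n:ℝ)+1))) atTop (nhds (Real.pi/2)) :=
      (tendsto_nhds_of_tendsto_nhdsWithin Real.tendsto_arctan_atTop).comp h3
    have := (h4.sub h2).div_const 2
    rw [Real.sign_of_pos hs,
      show Real.pi/4 * (1:ℝ) = (Real.pi/2 - 0)/2 by ring]
    exact this

noncomputable def Wf (x : ℝ → ℝ) (f : ℝ → ℂ) (k : ℝ) : ℂ :=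
  ∫ y : ℝ, f y * Complex.exp (-Complex.I * (k : ℂ) * (x y : ℂ))

lemma Fk_eq (x : ℝ → ℝ) (f : ℝ → ℂ) (k : ℝ) :
    Fk x f k = (Real.sqrt (2 * Real.pi) : ℂ)⁻¹ * Wf x f k := rfl

lemma norm_exp_I_mul (t : ℝ) : ‖Complex.exp (-Complex.I * (t:ℂ))‖ = 1 := by
  rw [Complex.norm_exp]
  simp

lemma norm_exp_I_mul' (k t : ℝ) : ‖Complex.exp (-Complex.I * (k:ℂ) * (t:ℂ))‖ = 1 := by
  rw [Complex.norm_exp]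
  simp

lemma Wf_meas (x : ℝ → ℝ) (hxc : Continuous x) (f : ℝ → ℂ) (hfm : StronglyMeasurable f) :
    StronglyMeasurable (Wf x f) := by
  apply MeasureTheory.StronglyMeasurable.integral_prod_right'
    (f := fun p : ℝ × ℝ => f p.2 * Complex.exp (-Complex.I * (p.1 : ℂ) * (x p.2 : ℂ)))
  apply StronglyMeasurable.mul (hfm.comp_measurable measurable_snd)
  apply Continuous.stronglyMeasurable
  exact Complex.continuous_exp.comp ((continuous_const.mul
    (Complex.continuous_ofReal.comp continuous_fst)).mul
    (Complex.continuous_ofReal.comp (hxc.comp continuous_snd)))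

lemma Wf_bound (x : ℝ → ℝ) (f : ℝ → ℂ) (k : ℝ) :
    ‖Wf x f k‖ ≤ ∫ y : ℝ, ‖f y‖ := by
  refine (norm_integral_le_integral_norm _).trans_eq ?_
  refine integral_congr_ae (Eventually.of_forall fun y => ?_)
  show ‖f y * Complex.exp (-Complex.I * (k:ℂ) * (x y:ℂ))‖ = ‖f y‖
  rw [norm_mul, norm_exp_I_mul', mul_one]

lemma integrable_Wf_integrand (x : ℝ → ℝ) (hxc : Continuous x) (f : ℝ → ℂ)
    (hfm : StronglyMeasurable f) (hf : Integrable f) (k : ℝ) :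
    Integrable (fun y : ℝ => f y * Complex.exp (-Complex.I * (k : ℂ) * (x y : ℂ))) := by
  apply Integrable.mono' hf.norm
  · apply StronglyMeasurable.aestronglyMeasurable
    apply hfm.mul
    apply Continuous.stronglyMeasurable
    exact Complex.continuous_exp.comp ((continuous_const.mul continuous_const).mul
      (Complex.continuous_ofReal.comp hxc))
  · filter_upwards with y
    rw [norm_mul, norm_exp_I_mul', mul_one]

section main
variable (x : ℝ → ℝ) (f : ℝ → ℂ)

local notation "M" => ∫ y : ℝ, ‖f y‖

lemma conj_Wf (k : ℝ) :
    (starRingEnd ℂ) (Wf x f k) = ∫ y : ℝ, (starRingEnd ℂ) (f y) *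
      Complex.exp (Complex.I * (k:ℂ) * (x y : ℂ)) := by
  rw [Wf, ← integral_conj]
  refine integral_congr_ae (Eventually.of_forall fun y => ?_)
  show (starRingEnd ℂ) (f y * Complex.exp (-Complex.I * (k:ℂ) * (x y:ℂ))) = _
  rw [map_mul, ← Complex.exp_conj]
  congr 2
  simp

lemma quad_expand (k : ℝ) :
    (starRingEnd ℂ) (Wf x f k) * Wf x f k
      = ∫ z : ℝ×ℝ, ((starRingEnd ℂ) (f z.1) * f z.2) *
          Complex.exp (Complex.I * (k:ℂ) * ((x z.1 : ℂ) - (x z.2 : ℂ))) := by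
  rw [conj_Wf, Wf, ← integral_prod_mul, ← Measure.volume_eq_prod]
  refine integral_congr_ae (Eventually.of_forall fun z => ?_)
  show (starRingEnd ℂ) (f z.1) * Complex.exp (Complex.I * (k:ℂ) * (x z.1 : ℂ)) *
      (f z.2 * Complex.exp (-Complex.I * (k:ℂ) * (x z.2 : ℂ))) = _
  rw [mul_mul_mul_comm, ← Complex.exp_add]
  congr 2
  ring

lemma quad_expand_neg (k : ℝ) :
    (starRingEnd ℂ) (Wf x f (-k)) * Wf x f (-k)
      = ∫ z : ℝ×ℝ, ((starRingEnd ℂ) (f z.1) * f z.2) *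
          Complex.exp (-Complex.I * (k:ℂ) * ((x z.1 : ℂ) - (x z.2 : ℂ))) := by
  rw [conj_Wf, Wf, ← integral_prod_mul, ← Measure.volume_eq_prod]
  refine integral_congr_ae (Eventually.of_forall fun z => ?_)
  show (starRingEnd ℂ) (f z.1) * Complex.exp (Complex.I * ((-k : ℝ):ℂ) * (x z.1 : ℂ)) *
      (f z.2 * Complex.exp (-Complex.I * ((-k:ℝ):ℂ) * (x z.2 : ℂ))) = _
  rw [mul_mul_mul_comm, ← Complex.exp_add]
  push_cast
  congr 2
  ring
end main

lemma exp_sub_exp (k s : ℝ) :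
    Complex.exp (Complex.I * (k:ℂ) * (s:ℂ)) - Complex.exp (-Complex.I * (k:ℂ) * (s:ℂ))
      = 2*Complex.I*((Real.sin (s*k) : ℝ):ℂ) := by
  rw [show Complex.I * (k:ℂ) * (s:ℂ) = ((s*k : ℝ):ℂ) * Complex.I by push_cast; ring,
    show -Complex.I * (k:ℂ) * (s:ℂ) = ((-(s*k) : ℝ):ℂ) * Complex.I by push_cast; ring,
    Complex.exp_mul_I, Complex.exp_mul_I, Complex.ofReal_sin, Complex.ofReal_neg,
    Complex.cos_neg, Complex.sin_neg]
  ring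

section main2
variable (x : ℝ → ℝ) (f : ℝ → ℂ) (hxc : Continuous x) (hfm : StronglyMeasurable f)
  (hf : Integrable f)

noncomputable def Psi (x : ℝ → ℝ) (f : ℝ → ℂ) (n : ℕ) (k : ℝ) (z : ℝ × ℝ) : ℂ :=
  (starRingEnd ℂ) (f z.1) * f z.2 * (2*Complex.I) *
    ((Kn n k * Real.sin ((x z.1 - x z.2)*k) : ℝ):ℂ)

lemma my_integral_ofReal {α : Type*} [MeasurableSpace α] {μ : Measure α} (g : α → ℝ) :
    ∫ a, ((g a : ℝ) : ℂ) ∂μ = ((∫ a, g a ∂μ : ℝ) : ℂ) := integral_ofReal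

lemma my_integral_re {α : Type*} [MeasurableSpace α] {μ : Measure α} {g : α → ℂ}
    (hg : Integrable g μ) : ∫ a, (g a).re ∂μ = (∫ a, g a ∂μ).re := integral_re hg

lemma integrable_pair (hf2 : Integrable f) : Integrable (fun z : ℝ×ℝ => ‖f z.1‖ * ‖f z.2‖) := by
  rw [Measure.volume_eq_prod]
  exact hf2.norm.mul_prod hf2.norm

include hxc hfm hf

lemma integrable_gexp (c : ℝ) :
    Integrable (fun z : ℝ×ℝ => (starRingEnd ℂ) (f z.1) * f z.2 *
      Complex.exp (Complex.I * (c:ℂ) * ((x z.1 : ℂ) - (x z.2 : ℂ)))) := by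
  apply Integrable.mono' (integrable_pair f hf)
  · apply Measurable.aestronglyMeasurable
    apply Measurable.mul
    · exact ((Complex.continuous_conj.measurable.comp hfm.measurable).comp measurable_fst).mul
        (hfm.measurable.comp measurable_snd)
    · apply Continuous.measurable
      exact Complex.continuous_exp.comp (continuous_const.mul
        ((Complex.continuous_ofReal.comp (hxc.comp continuous_fst)).sub
         (Complex.continuous_ofReal.comp (hxc.comp continuous_snd))))
  · filter_upwards with z
    rw [norm_mul, norm_mul]
    have h1 : ‖Complex.exp (Complex.I * (c:ℂ) * ((x z.1 : ℂ) - (x z.2 : ℂ)))‖ = 1 := by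
      rw [Complex.norm_exp]
      simp
    rw [h1, mul_one, RCLike.norm_conj]

lemma integrable_gexp' (c : ℝ) :
    Integrable (fun z : ℝ×ℝ => (starRingEnd ℂ) (f z.1) * f z.2 *
      Complex.exp (-Complex.I * (c:ℂ) * ((x z.1 : ℂ) - (x z.2 : ℂ)))) := by
  have := integrable_gexp x f hxc hfm hf (-c)
  refine this.congr (Eventually.of_forall fun z => ?_)
  show (starRingEnd ℂ) (f z.1) * f z.2 *
      Complex.exp (Complex.I * ((-c : ℝ):ℂ) * ((x z.1 : ℂ) - (x z.2 : ℂ))) = _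
  congr 2
  push_cast
  ring

lemma Phi_eq (n : ℕ) (k : ℝ) :
    ((Kn n k : ℝ):ℂ) * ((starRingEnd ℂ) (Wf x f k) * Wf x f k)
      - ((Kn n k : ℝ):ℂ) * ((starRingEnd ℂ) (Wf x f (-k)) * Wf x f (-k))
      = ∫ z : ℝ×ℝ, Psi x f n k z := by
  rw [quad_expand, quad_expand_neg, ← integral_const_mul, ← integral_const_mul,
    ← integral_sub ((integrable_gexp x f hxc hfm hf k).const_mul _)
      ((integrable_gexp' x f hxc hfm hf k).const_mul _)]
  refine integral_congr_ae (Eventually.of_forall fun z => ?_)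
  show ((Kn n k : ℝ):ℂ) * ((starRingEnd ℂ) (f z.1) * f z.2 *
      Complex.exp (Complex.I * (k:ℂ) * ((x z.1 : ℂ) - (x z.2 : ℂ))))
    - ((Kn n k : ℝ):ℂ) * ((starRingEnd ℂ) (f z.1) * f z.2 *
      Complex.exp (-Complex.I * (k:ℂ) * ((x z.1 : ℂ) - (x z.2 : ℂ)))) = Psi x f n k z
  rw [Psi, show ((x z.1 : ℂ) - (x z.2 : ℂ)) = ((x z.1 - x z.2 : ℝ) : ℂ) by push_cast; ring,
    ← mul_sub, ← mul_sub, exp_sub_exp]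
  push_cast
  ring

lemma integrable_Psi (n : ℕ) :
    Integrable (Function.uncurry (Psi x f n)) ((volume.restrict (Ioi 0)).prod volume) := by
  apply Integrable.mono'
    (g := fun p : ℝ × (ℝ×ℝ) => (2 * |Kn n p.1|) * (‖f p.2.1‖ * ‖f p.2.2‖))
    (((Kn_integrableOn n).abs.const_mul 2).mul_prod (integrable_pair f hf))
  · apply Measurable.aestronglyMeasurable
    apply Measurable.mul
    · apply Measurable.mul
      · exact ((Complex.continuous_conj.measurable.comp hfm.measurable).comp
          (measurable_fst.comp measurable_snd)).mul
          (hfm.measurable.comp (measurable_snd.comp measurable_snd))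
      · exact measurable_const
    · apply Complex.measurable_ofReal.comp
      apply Measurable.mul
      · exact (Kn_measurable n).comp measurable_fst
      · apply Real.measurable_sin.comp
        apply Measurable.mul _ measurable_fst
        exact ((hxc.measurable.comp (measurable_fst.comp measurable_snd)).sub
          (hxc.measurable.comp (measurable_snd.comp measurable_snd)))
  · filter_upwards with p
    rw [Function.uncurry, Psi]
    rw [norm_mul, norm_mul, norm_mul, RCLike.norm_conj]
    have h2 : ‖(2 : ℂ)*Complex.I‖ = 2 := by
      rw [norm_mul, Complex.norm_I, mul_one, Complex.norm_ofNat]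
    rw [h2, Complex.norm_real, Real.norm_eq_abs, abs_mul]
    have h3 : |Real.sin ((x p.2.1 - x p.2.2)*p.1)| ≤ 1 := Real.abs_sin_le_one _
    have h4 : (0:ℝ) ≤ ‖f p.2.1‖ * ‖f p.2.2‖ := by positivity
    calc ‖f p.2.1‖ * ‖f p.2.2‖ * 2 * (|Kn n p.1| * |Real.sin ((x p.2.1 - x p.2.2)*p.1)|)
        ≤ ‖f p.2.1‖ * ‖f p.2.2‖ * 2 * (|Kn n p.1| * 1) := by
          apply mul_le_mul_of_nonneg_left _ (by positivity)
          exact mul_le_mul_of_nonneg_left h3 (abs_nonneg _)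
      _ = (2 * |Kn n p.1|) * (‖f p.2.1‖ * ‖f p.2.2‖) := by ring

omit hxc hfm hf in
lemma inner_k (n : ℕ) (z : ℝ × ℝ) :
    ∫ k in Ioi (0:ℝ), Psi x f n k z
      = (starRingEnd ℂ) (f z.1) * f z.2 * (2*Complex.I) * ((Sn n (x z.1 - x z.2) : ℝ):ℂ) := by
  rw [show (fun k => Psi x f n k z) = fun k => ((starRingEnd ℂ) (f z.1) * f z.2 * (2*Complex.I)) *
      (((Kn n k * Real.sin ((x z.1 - x z.2)*k) : ℝ):ℂ)) from rfl,
    integral_const_mul, my_integral_ofReal, integral_Kn_sin]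

lemma integrable_KW (n : ℕ) (c : ℝ → ℝ) (hc : Measurable c) (hb : ∀ k, ‖Wf x f (c k)‖ ≤ M) :
    IntegrableOn (fun k : ℝ => ((Kn n k : ℝ):ℂ) *
      ((starRingEnd ℂ) (Wf x f (c k)) * Wf x f (c k))) (Ioi 0) := by
  have hWm : StronglyMeasurable (fun k => Wf x f (c k)) :=
    (Wf_meas x hxc f hfm).comp_measurable hc
  apply Integrable.mono' (g := fun k : ℝ => |Kn n k| * (M * M))
    ((Kn_integrableOn n).abs.mul_const _)
  · apply StronglyMeasurable.aestronglyMeasurable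
    exact ((Complex.measurable_ofReal.comp (Kn_measurable n)).stronglyMeasurable.mul
      ((Complex.continuous_conj.comp_stronglyMeasurable hWm).mul hWm))
  · filter_upwards with k
    rw [norm_mul, norm_mul, RCLike.norm_conj, Complex.norm_real, Real.norm_eq_abs]
    apply mul_le_mul_of_nonneg_left _ (abs_nonneg _)
    have hM : (0:ℝ) ≤ M := (norm_nonneg _).trans (hb 0)
    exact mul_le_mul (hb k) (hb k) (norm_nonneg _) hM

omit hxc hfm hf in
lemma re_helper (r : ℝ) (z : ℂ) : (((r:ℝ):ℂ) * ((starRingEnd ℂ) z * z)).re = r * ‖z‖^2 := by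
  rw [mul_comm ((starRingEnd ℂ) z) z, Complex.mul_conj, ← Complex.ofReal_mul]
  rw [Complex.ofReal_re, Complex.normSq_eq_norm_sq]

omit hxc hfm hf in
lemma normFk_sq (k : ℝ) : ‖Fk x f k‖^2 = (2*Real.pi)⁻¹ * ‖Wf x f k‖^2 := by
  rw [Fk_eq, norm_mul, mul_pow, norm_inv, Complex.norm_real, Real.norm_eq_abs,
    abs_of_nonneg (Real.sqrt_nonneg _), inv_pow, Real.sq_sqrt (by positivity : (0:ℝ) ≤ 2*Real.pi)]

lemma key_identity (n : ℕ) :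
    (∫ k in Ioi (0:ℝ), Kn n k * ‖Fk x f k‖^2) - (∫ k in Ioi (0:ℝ), Kn n k * ‖Fk x f (-k)‖^2)
      = (2*Real.pi)⁻¹ * (∫ z : ℝ×ℝ, (starRingEnd ℂ) (f z.1) * f z.2 * (2*Complex.I) *
          ((Sn n (x z.1 - x z.2) : ℝ):ℂ)).re := by
  have h₁ := integrable_KW x f hxc hfm hf n id measurable_id (fun k => Wf_bound x f (id k))
  simp only [id_eq] at h₁
  have h₂ := integrable_KW x f hxc hfm hf n Neg.neg measurable_neg (fun k => Wf_bound x f (-k))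
  have e₁ : (∫ k in Ioi (0:ℝ), Kn n k * ‖Fk x f k‖^2)
      = (2*Real.pi)⁻¹ * (∫ k in Ioi (0:ℝ), ((Kn n k : ℝ):ℂ) *
          ((starRingEnd ℂ) (Wf x f k) * Wf x f k)).re := by
    rw [← my_integral_re h₁, ← integral_const_mul]
    refine integral_congr_ae (Eventually.of_forall fun k => ?_)
    show Kn n k * ‖Fk x f k‖^2 = (2*Real.pi)⁻¹ * (((Kn n k : ℝ):ℂ) *
      ((starRingEnd ℂ) (Wf x f k) * Wf x f k)).re
    rw [re_helper, normFk_sq x f]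
    ring
  have e₂ : (∫ k in Ioi (0:ℝ), Kn n k * ‖Fk x f (-k)‖^2)
      = (2*Real.pi)⁻¹ * (∫ k in Ioi (0:ℝ), ((Kn n k : ℝ):ℂ) *
          ((starRingEnd ℂ) (Wf x f (-k)) * Wf x f (-k))).re := by
    rw [← my_integral_re h₂, ← integral_const_mul]
    refine integral_congr_ae (Eventually.of_forall fun k => ?_)
    show Kn n k * ‖Fk x f (-k)‖^2 = (2*Real.pi)⁻¹ * (((Kn n k : ℝ):ℂ) *
      ((starRingEnd ℂ) (Wf x f (-k)) * Wf x f (-k))).re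
    rw [re_helper, normFk_sq x f]
    ring
  rw [e₁, e₂, ← mul_sub, ← Complex.sub_re, ← integral_sub h₁ h₂]
  congr 2
  calc (∫ k in Ioi (0:ℝ), (((Kn n k : ℝ):ℂ) * ((starRingEnd ℂ) (Wf x f (id k)) * Wf x f (id k))
        - ((Kn n k : ℝ):ℂ) * ((starRingEnd ℂ) (Wf x f (-k)) * Wf x f (-k))))
      = ∫ k in Ioi (0:ℝ), ∫ z : ℝ×ℝ, Psi x f n k z := by
        refine integral_congr_ae (Eventually.of_forall fun k => ?_)
        exact Phi_eq x f hxc hfm hf n k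
    _ = ∫ z : ℝ×ℝ, ∫ k in Ioi (0:ℝ), Psi x f n k z :=
        integral_integral_swap (integrable_Psi x f hxc hfm hf n)
    _ = ∫ z : ℝ×ℝ, (starRingEnd ℂ) (f z.1) * f z.2 * (2*Complex.I) *
          ((Sn n (x z.1 - x z.2) : ℝ):ℂ) := by
        refine integral_congr_ae (Eventually.of_forall fun z => ?_)
        exact inner_k x f n z

end main2

lemma Sn_bound (n : ℕ) (s : ℝ) : |Sn n s| ≤ Real.pi/2 := by
  rw [Sn, abs_div, abs_of_nonneg (by norm_num : (0:ℝ) ≤ 2), div_le_iff₀ (by norm_num : (0:ℝ) < 2)]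
  have h1 := Real.arctan_lt_pi_div_two (s*((n:ℝ)+1))
  have h2 := Real.neg_pi_div_two_lt_arctan (s*((n:ℝ)+1))
  have h3 := Real.arctan_lt_pi_div_two (s/((n:ℝ)+1))
  have h4 := Real.neg_pi_div_two_lt_arctan (s/((n:ℝ)+1))
  rw [abs_le]
  constructor <;> nlinarith

lemma sign_sub_of_strictMono {x : ℝ → ℝ} (hxm : StrictMono x) (a b : ℝ) :
    Real.sign (x a - x b) = Real.sign (a - b) := by
  rcases lt_trichotomy a b with h | h | h
  · rw [Real.sign_of_neg (by linarith [hxm h]), Real.sign_of_neg (by linarith)]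
  · subst h; simp
  · rw [Real.sign_of_pos (by linarith [hxm h]), Real.sign_of_pos (by linarith)]

lemma dct_lemma (x : ℝ → ℝ) (hxc : Continuous x) (hxm : StrictMono x) (f : ℝ → ℂ)
    (hfm : StronglyMeasurable f) (hf : Integrable f) :
    Tendsto (fun n : ℕ => (∫ z : ℝ×ℝ, (starRingEnd ℂ) (f z.1) * f z.2 * (2*Complex.I) *
        ((Sn n (x z.1 - x z.2) : ℝ):ℂ)).re) atTop
      (nhds ((∫ z : ℝ×ℝ, (starRingEnd ℂ) (f z.1) * f z.2 * (2*Complex.I) *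
        ((Real.pi/4 * Real.sign (z.1 - z.2) : ℝ):ℂ)).re)) := by
  have hpair : Integrable (fun z : ℝ×ℝ => ‖f z.1‖ * ‖f z.2‖) := by
    rw [Measure.volume_eq_prod]; exact hf.norm.mul_prod hf.norm
  have hmeasg : Measurable (fun z : ℝ×ℝ => (starRingEnd ℂ) (f z.1) * f z.2 * (2*Complex.I)) :=
    (((Complex.continuous_conj.measurable.comp hfm.measurable).comp measurable_fst).mul
      (hfm.measurable.comp measurable_snd)).mul measurable_const
  have key : Tendsto (fun n : ℕ => ∫ z : ℝ×ℝ, (starRingEnd ℂ) (f z.1) * f z.2 * (2*Complex.I) *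
        ((Sn n (x z.1 - x z.2) : ℝ):ℂ)) atTop
      (nhds (∫ z : ℝ×ℝ, (starRingEnd ℂ) (f z.1) * f z.2 * (2*Complex.I) *
        ((Real.pi/4 * Real.sign (z.1 - z.2) : ℝ):ℂ))) := by
    apply tendsto_integral_of_dominated_convergence
      (bound := fun z : ℝ×ℝ => (2*Real.pi) * (‖f z.1‖ * ‖f z.2‖))
    · intro n
      apply Measurable.aestronglyMeasurable
      have hSn : Continuous (Sn n) := by
        unfold Sn
        exact ((Real.continuous_arctan.comp (continuous_id.mul continuous_const)).sub
          (Real.continuous_arctan.comp (continuous_id.div_const _))).div_const _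
      exact hmeasg.mul (Complex.measurable_ofReal.comp ((hSn.comp
        ((hxc.comp continuous_fst).sub (hxc.comp continuous_snd))).measurable))
    · exact hpair.const_mul _
    · intro n
      filter_upwards with z
      rw [norm_mul, norm_mul, norm_mul, RCLike.norm_conj, Complex.norm_real]
      have h2 : ‖(2 : ℂ)*Complex.I‖ = 2 := by
        rw [norm_mul, Complex.norm_I, mul_one, Complex.norm_ofNat]
      rw [h2, Real.norm_eq_abs]
      have := Sn_bound n (x z.1 - x z.2)
      have hπ : 0 < Real.pi := Real.pi_pos
      nlinarith [mul_le_mul_of_nonneg_left this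
        (mul_nonneg (norm_nonneg (f z.1)) (norm_nonneg (f z.2))),
        mul_nonneg (norm_nonneg (f z.1)) (norm_nonneg (f z.2))]
    · filter_upwards with z
      have h5 : Tendsto (fun n : ℕ => Sn n (x z.1 - x z.2)) atTop
          (nhds (Real.pi/4 * Real.sign (z.1 - z.2))) := by
        rw [← sign_sub_of_strictMono hxm z.1 z.2]
        exact Kn_sin_tendsto (x z.1 - x z.2)
      exact tendsto_const_nhds.mul ((Complex.continuous_ofReal.tendsto _).comp h5)
  exact (Complex.continuous_re.tendsto _).comp key

lemma qlim (g : ℝ → ℂ) (hgm : StronglyMeasurable g) (M0 : ℝ) (hb : ∀ k, ‖g k‖ ≤ M0) :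
    Tendsto (fun n : ℕ => ENNReal.ofReal (∫ k in Ioi (0:ℝ), Kn n k * ‖g k‖^2)) atTop
      (nhds (∫⁻ k in Ioi (0:ℝ), ENNReal.ofReal (‖g k‖^2/(2*k)))) := by
  have hM0 : 0 ≤ M0 := (norm_nonneg (g 0)).trans (hb 0)
  have hgsq : Measurable (fun k => ‖g k‖^2) := (hgm.measurable.norm).pow_const 2
  have hint : ∀ n : ℕ, IntegrableOn (fun k => Kn n k * ‖g k‖^2) (Ioi 0) := by
    intro n
    apply Integrable.mono' (g := fun k => |Kn n k| * M0^2) ((Kn_integrableOn n).abs.mul_const _)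
      ((show Measurable fun k => Kn n k * ‖g k‖^2 from (Kn_measurable n).mul hgsq).aestronglyMeasurable)
    filter_upwards with k
    rw [Real.norm_eq_abs, abs_mul, abs_of_nonneg (by positivity : (0:ℝ) ≤ ‖g k‖^2)]
    apply mul_le_mul_of_nonneg_left _ (abs_nonneg _)
    exact pow_le_pow_left₀ (norm_nonneg _) (hb k) 2
  have heq : ∀ n : ℕ, ENNReal.ofReal (∫ k in Ioi (0:ℝ), Kn n k * ‖g k‖^2)
      = ∫⁻ k in Ioi (0:ℝ), ENNReal.ofReal (Kn n k * ‖g k‖^2) := by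
    intro n
    apply ofReal_integral_eq_lintegral_ofReal (hint n)
    filter_upwards [ae_restrict_mem measurableSet_Ioi] with k hk
    exact mul_nonneg (Kn_nonneg n hk) (by positivity)
  have hmono : Monotone (fun n : ℕ => ∫⁻ k in Ioi (0:ℝ), ENNReal.ofReal (Kn n k * ‖g k‖^2)) := by
    apply monotone_nat_of_le_succ
    intro n
    apply lintegral_mono_ae
    filter_upwards [ae_restrict_mem measurableSet_Ioi] with k hk
    exact ENNReal.ofReal_le_ofReal (mul_le_mul_of_nonneg_right (Kn_mono hk) (by positivity))
  have hsup : (⨆ n : ℕ, ∫⁻ k in Ioi (0:ℝ), ENNReal.ofReal (Kn n k * ‖g k‖^2))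
      = ∫⁻ k in Ioi (0:ℝ), ENNReal.ofReal (‖g k‖^2/(2*k)) := by
    rw [← lintegral_iSup' (fun n => (show Measurable fun k => Kn n k * ‖g k‖^2 from (Kn_measurable n).mul hgsq).ennreal_ofReal.aemeasurable)]
    · apply lintegral_congr_ae
      filter_upwards [ae_restrict_mem measurableSet_Ioi] with k hk
      have hmono2 : Monotone (fun n : ℕ => ENNReal.ofReal (Kn n k * ‖g k‖^2)) := by
        apply monotone_nat_of_le_succ
        intro n
        exact ENNReal.ofReal_le_ofReal (mul_le_mul_of_nonneg_right (Kn_mono hk) (by positivity))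
      have ht : Tendsto (fun n : ℕ => ENNReal.ofReal (Kn n k * ‖g k‖^2)) atTop
          (nhds (ENNReal.ofReal (‖g k‖^2/(2*k)))) := by
        have := ENNReal.tendsto_ofReal ((Kn_tendsto hk).mul_const (‖g k‖^2))
        rw [show 1/(2*k) * ‖g k‖^2 = ‖g k‖^2/(2*k) by ring] at this
        exact this
      exact tendsto_nhds_unique (tendsto_atTop_iSup hmono2) ht
    · filter_upwards [ae_restrict_mem measurableSet_Ioi] with k hk
      apply monotone_nat_of_le_succ
      intro n
      exact ENNReal.ofReal_le_ofReal (mul_le_mul_of_nonneg_right (Kn_mono hk) (by positivity))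
  have := tendsto_atTop_iSup hmono
  rw [hsup] at this
  exact this.congr (fun n => (heq n).symm)

lemma ft_eq_Fk_id (f : ℝ → ℂ) : ft f = Fk id f := rfl

lemma Fk_meas (x : ℝ → ℝ) (hxc : Continuous x) (f : ℝ → ℂ) (hfm : StronglyMeasurable f) :
    StronglyMeasurable (Fk x f) := by
  have h := (Wf_meas x hxc f hfm).const_mul ((Real.sqrt (2 * Real.pi) : ℂ)⁻¹)
  have hfk : Fk x f = fun k => (Real.sqrt (2 * Real.pi) : ℂ)⁻¹ * Wf x f k :=
    funext (Fk_eq x f)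
  rw [hfk]
  exact h

lemma Fk_bound (x : ℝ → ℝ) (f : ℝ → ℂ) (k : ℝ) :
    ‖Fk x f k‖ ≤ (Real.sqrt (2 * Real.pi))⁻¹ * ∫ y : ℝ, ‖f y‖ := by
  rw [Fk_eq, norm_mul, norm_inv, Complex.norm_real, Real.norm_eq_abs,
    abs_of_nonneg (Real.sqrt_nonneg _)]
  exact mul_le_mul_of_nonneg_left (Wf_bound x f k) (by positivity)

theorem bogoliubov (x : ℝ → ℝ) (hxc : Continuous x) (hxm : StrictMono x) (f : ℝ → ℂ)
    (hfm : StronglyMeasurable f) (hf : Integrable f)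
    (hfp : ∀ᵐ p : ℝ, p ≤ 0 → ft f p = 0)
    (hfn : (∫⁻ p in Set.Ioi (0:ℝ), ENNReal.ofReal (‖ft f p‖ ^ 2 / (2 * p))) = 1)
    (hNo : No x f < ⊤) :
    (∫⁻ k in Set.Ioi (0:ℝ), ENNReal.ofReal (‖Fk x f k‖ ^ 2 / (2 * k)))
      = 1 + No x f := by
  set L : ℝ := (2*Real.pi)⁻¹ * (∫ z : ℝ×ℝ, (starRingEnd ℂ) (f z.1) * f z.2 * (2*Complex.I) *
      ((Real.pi/4 * Real.sign (z.1 - z.2) : ℝ):ℂ)).re with hL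
  -- generic side computation
  have side : ∀ x' : ℝ → ℝ, Continuous x' → StrictMono x' →
      Tendsto (fun n : ℕ => (∫ k in Ioi (0:ℝ), Kn n k * ‖Fk x' f k‖^2)
        - (∫ k in Ioi (0:ℝ), Kn n k * ‖Fk x' f (-k)‖^2)) atTop (nhds L) := by
    intro x' hxc' hxm'
    have h1 := (dct_lemma x' hxc' hxm' f hfm hf).const_mul ((2*Real.pi)⁻¹)
    refine h1.congr (fun n => ?_)
    exact (key_identity x' f hxc' hfm hf n).symm
  -- measurability/boundedness of the two Fk functions for generic x'
  have hmeas : ∀ x' : ℝ → ℝ, Continuous x' → StronglyMeasurable (fun k => Fk x' f (-k)) :=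
    fun x' hxc' => (Fk_meas x' hxc' f hfm).comp_measurable measurable_neg
  have hbd : ∀ (x' : ℝ → ℝ) (k : ℝ),
      ‖Fk x' f (-k)‖ ≤ (Real.sqrt (2 * Real.pi))⁻¹ * ∫ y : ℝ, ‖f y‖ :=
    fun x' k => Fk_bound x' f (-k)
  -- nonnegativity of the integrals
  have hq_nonneg : ∀ (x' : ℝ → ℝ) (n : ℕ),
      0 ≤ ∫ k in Ioi (0:ℝ), Kn n k * ‖Fk x' f (-k)‖^2 := by
    intro x' n
    apply integral_nonneg_of_ae
    filter_upwards [ae_restrict_mem measurableSet_Ioi] with k hk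
    exact mul_nonneg (Kn_nonneg n hk) (by positivity)
  have hp_nonneg : ∀ (x' : ℝ → ℝ) (n : ℕ),
      0 ≤ ∫ k in Ioi (0:ℝ), Kn n k * ‖Fk x' f k‖^2 := by
    intro x' n
    apply integral_nonneg_of_ae
    filter_upwards [ae_restrict_mem measurableSet_Ioi] with k hk
    exact mul_nonneg (Kn_nonneg n hk) (by positivity)
  ----- FLAT SIDE: deduce L = 1
  have hq0 : ∀ n : ℕ, (∫ k in Ioi (0:ℝ), Kn n k * ‖Fk id f (-k)‖^2) = 0 := by
    intro n
    have hae : ∀ᵐ k : ℝ, -k ≤ 0 → ft f (-k) = 0 :=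
      (Measure.measurePreserving_neg (volume : Measure ℝ)).quasiMeasurePreserving.ae hfp
    have : ∀ᵐ k ∂(volume.restrict (Ioi (0:ℝ))), Kn n k * ‖Fk id f (-k)‖^2 = 0 := by
      filter_upwards [ae_restrict_mem measurableSet_Ioi, ae_restrict_of_ae hae] with k hk h2
      rw [← ft_eq_Fk_id, h2 (by linarith [mem_Ioi.mp hk])]
      simp
    rw [integral_congr_ae this, integral_zero]
  have hflat : Tendsto (fun n : ℕ => (∫ k in Ioi (0:ℝ), Kn n k * ‖Fk id f k‖^2)) atTop (nhds L) := by
    have := side id continuous_id strictMono_id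
    refine Tendsto.congr (fun n => ?_) this
    rw [hq0 n, sub_zero]
  have hflat2 : Tendsto (fun n : ℕ => ENNReal.ofReal (∫ k in Ioi (0:ℝ), Kn n k * ‖Fk id f k‖^2))
      atTop (nhds (ENNReal.ofReal L)) := ENNReal.tendsto_ofReal hflat
  have hflat3 := qlim (fun k => Fk id f k) (Fk_meas id continuous_id f hfm) _
      (fun k => Fk_bound id f k)
  have hL1 : ENNReal.ofReal L = 1 := by
    have h4 : (∫⁻ k in Ioi (0:ℝ), ENNReal.ofReal (‖Fk id f k‖^2/(2*k))) = 1 := by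
      rw [← hfn, ft_eq_Fk_id]
    rw [← h4]
    exact tendsto_nhds_unique hflat2 (by exact hflat3)
  have hLval : L = 1 := ENNReal.ofReal_eq_one.mp hL1
  ----- BH SIDE
  have hqtend : Tendsto (fun n : ℕ =>
      ENNReal.ofReal (∫ k in Ioi (0:ℝ), Kn n k * ‖Fk x f (-k)‖^2)) atTop (nhds (No x f)) := by
    have := qlim (fun k => Fk x f (-k)) (hmeas x hxc) _ (hbd x)
    exact this
  have hqreal : Tendsto (fun n : ℕ => (∫ k in Ioi (0:ℝ), Kn n k * ‖Fk x f (-k)‖^2)) atTop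
      (nhds (No x f).toReal) := by
    have h5 := (ENNReal.tendsto_toReal hNo.ne).comp hqtend
    refine h5.congr (fun n => ?_)
    show (ENNReal.ofReal (∫ k in Ioi (0:ℝ), Kn n k * ‖Fk x f (-k)‖^2)).toReal = _
    exact ENNReal.toReal_ofReal (hq_nonneg x n)
  have hptend : Tendsto (fun n : ℕ => (∫ k in Ioi (0:ℝ), Kn n k * ‖Fk x f k‖^2)) atTop
      (nhds (L + (No x f).toReal)) := by
    have := (side x hxc hxm).add hqreal
    refine this.congr (fun n => ?_)
    ring
  have hfinal : (∫⁻ k in Ioi (0:ℝ), ENNReal.ofReal (‖Fk x f k‖^2/(2*k)))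
      = ENNReal.ofReal (L + (No x f).toReal) := by
    refine tendsto_nhds_unique ?_ (ENNReal.tendsto_ofReal hptend)
    exact qlim (fun k => Fk x f k) (Fk_meas x hxc f hfm) _ (fun k => Fk_bound x f k)
  rw [hfinal, hLval, ENNReal.ofReal_add (by norm_num) ENNReal.toReal_nonneg,
    ENNReal.ofReal_one, ENNReal.ofReal_toReal hNo.ne]

lemma conj_mul_self (z : ℂ) : (starRingEnd ℂ) z * z = ((‖z‖^2 : ℝ) : ℂ) := by
  rw [mul_comm, Complex.mul_conj, Complex.normSq_eq_norm_sq]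

theorem stmt8_core (x : ℝ → ℝ) (hxc : Continuous x) (hxm : StrictMono x) (f : ℝ → ℂ)
    (hfm : StronglyMeasurable f) (hf : Integrable f)
    (hfp : ∀ᵐ p : ℝ, p ≤ 0 → ft f p = 0)
    (hfn : (∫⁻ p in Set.Ioi (0:ℝ), ENNReal.ofReal (‖ft f p‖ ^ 2 / (2 * p))) = 1)
    (hNo : No x f < ⊤) :
    1 + No x f ≤ No x f +
      ENNReal.ofReal (‖∫ k in Set.Ioi (0:ℝ),
          (starRingEnd ℂ) (gclhat x f k) * Fk x f k / (2 * (k : ℂ))‖ ^ 2) +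
      ENNReal.ofReal (‖∫ k in Set.Ioi (0:ℝ),
          gclhat x f k * Fk x f (-k) / (2 * (k : ℂ))‖ ^ 2) := by
  have hbog := bogoliubov x hxc hxm f hfm hf hfp hfn hNo
  set I0 : ℝ := ∫ k in Set.Ioi (0:ℝ), ‖Fk x f k‖ ^ 2 / (2 * k) with hI0
  have hInn : 0 ≤ᵐ[volume.restrict (Ioi (0:ℝ))] fun k => ‖Fk x f k‖ ^ 2 / (2 * k) := by
    filter_upwards [ae_restrict_mem measurableSet_Ioi] with k hk
    have : (0:ℝ) < k := hk
    positivity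
  have hIm : AEStronglyMeasurable (fun k => ‖Fk x f k‖ ^ 2 / (2 * k))
      (volume.restrict (Ioi (0:ℝ))) := by
    apply Measurable.aestronglyMeasurable
    exact (((Fk_meas x hxc f hfm).measurable.norm).pow_const 2).div
      (measurable_const.mul measurable_id)
  have hI0val : I0 = (1 + No x f).toReal := by
    rw [hI0, integral_eq_lintegral_of_nonneg_ae hInn hIm, hbog]
  have hNo_ne : No x f ≠ ⊤ := hNo.ne
  have htop : (1 : ℝ≥0∞) + No x f ≠ ⊤ := by
    simp [hNo_ne]
  have hI0_ge : (1:ℝ) ≤ I0 := by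
    rw [hI0val, ENNReal.toReal_add (by simp) hNo_ne]
    simp [ENNReal.toReal_nonneg]
  have hI0_pos : (0:ℝ) < I0 := by linarith
  have hnormA : normA x f = Real.sqrt I0 := rfl
  -- compute the A-term
  have hA : (∫ k in Set.Ioi (0:ℝ), (starRingEnd ℂ) (gclhat x f k) * Fk x f k / (2 * (k:ℂ)))
      = ((Real.sqrt I0 : ℝ) : ℂ) := by
    have hptwise : ∀ k ∈ Set.Ioi (0:ℝ),
        (starRingEnd ℂ) (gclhat x f k) * Fk x f k / (2 * (k:ℂ))
          = (((‖Fk x f k‖ ^ 2 / (2*k)) / Real.sqrt I0 : ℝ) : ℂ) := by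
      intro k hk
      rw [gclhat, if_pos (mem_Ioi.mp hk), hnormA, map_div₀, Complex.conj_ofReal]
      rw [div_mul_eq_mul_div, conj_mul_self]
      push_cast
      ring
    rw [setIntegral_congr_fun measurableSet_Ioi hptwise, my_integral_ofReal, integral_div, ← hI0,
      Real.div_sqrt]
  have hAnorm : ‖∫ k in Set.Ioi (0:ℝ),
      (starRingEnd ℂ) (gclhat x f k) * Fk x f k / (2 * (k:ℂ))‖ ^ 2 = I0 := by
    rw [hA, Complex.norm_real, Real.norm_eq_abs, abs_of_nonneg (Real.sqrt_nonneg _),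
      Real.sq_sqrt hI0_pos.le]
  have h1le : (1:ℝ≥0∞) ≤ ENNReal.ofReal (‖∫ k in Set.Ioi (0:ℝ),
      (starRingEnd ℂ) (gclhat x f k) * Fk x f k / (2 * (k:ℂ))‖ ^ 2) := by
    rw [hAnorm]
    exact ENNReal.one_le_ofReal.mpr hI0_ge
  calc (1:ℝ≥0∞) + No x f = No x f + 1 := add_comm _ _
    _ ≤ No x f + ENNReal.ofReal (‖∫ k in Set.Ioi (0:ℝ),
          (starRingEnd ℂ) (gclhat x f k) * Fk x f k / (2 * (k:ℂ))‖ ^ 2) :=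
        add_le_add_right h1le _
    _ ≤ _ := le_self_add

lemma xR_cont : Continuous xR := (Real.continuous_exp.comp continuous_neg).neg

lemma xR_mono : StrictMono xR := by
  intro a b hab
  have : Real.exp (-b) < Real.exp (-a) := Real.exp_lt_exp.mpr (by linarith)
  simp only [xR]
  linarith

lemma one_add_exp_pos (y : ℝ) : (0:ℝ) < 1 + Real.exp (-y) := by positivity

lemma xC_cont : Continuous xC := by
  have h : Continuous fun y : ℝ => 1 + Real.exp (-y) :=
    continuous_const.add (Real.continuous_exp.comp continuous_neg)
  apply Continuous.neg
  rw [continuous_iff_continuousAt]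
  intro y
  exact ContinuousAt.comp (g := Real.log) (f := fun y : ℝ => 1 + Real.exp (-y))
    (Real.continuousAt_log (one_add_exp_pos y).ne') h.continuousAt

lemma xC_mono : StrictMono xC := by
  intro a b hab
  have h1 : Real.exp (-b) < Real.exp (-a) := Real.exp_lt_exp.mpr (by linarith)
  have h2 : Real.log (1 + Real.exp (-b)) < Real.log (1 + Real.exp (-a)) :=
    Real.log_lt_log (one_add_exp_pos b) (by linarith)
  simp only [xC]
  linarith

/-- For `x = x_R` or `x = x_C` and a normalized outgoing wave function `f`
with `N̄_o[f] < ∞`, the classical incoming function `g_cl` satisfies, via Wald's formula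
`N̄_{g_cl}[f] = N̄_o[f] + |⟨g̃_cl,Af̃⟩|² + |⟨g̃_cl*,Bf̃⟩|²`, the amplification bound
`1 + N̄_o[f] ≤ N̄_{g_cl}[f]`. -/
theorem stmt_8 (x : ℝ → ℝ) (hx : x = xR ∨ x = xC) (f : ℝ → ℂ)
    (hf : MeasureTheory.Integrable f)
    (hfp : ∀ᵐ p : ℝ, p ≤ 0 → ft f p = 0)
    (hfn : (∫⁻ p in Set.Ioi (0:ℝ),
        ENNReal.ofReal (‖ft f p‖ ^ 2 / (2 * p))) = 1)
    (hNo : No x f < ⊤) :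
    1 + No x f ≤ No x f +
      ENNReal.ofReal (‖∫ k in Set.Ioi (0:ℝ),
          (starRingEnd ℂ) (gclhat x f k) * Fk x f k / (2 * (k : ℂ))‖ ^ 2) +
      ENNReal.ofReal (‖∫ k in Set.Ioi (0:ℝ),
          gclhat x f k * Fk x f (-k) / (2 * (k : ℂ))‖ ^ 2) := by
  have hxc : Continuous x := by rcases hx with h | h <;> rw [h]
    <;> [exact xR_cont; exact xC_cont]
  have hxm : StrictMono x := by rcases hx with h | h <;> rw [h]
    <;> [exact xR_mono; exact xC_mono]
  set f' : ℝ → ℂ := (hf.1).mk f with hf'def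
  have hff' : f =ᵐ[volume] f' := hf.1.ae_eq_mk
  have hf'm : StronglyMeasurable f' := hf.1.stronglyMeasurable_mk
  have hf' : Integrable f' := hf.congr hff'
  have hFk : ∀ x' : ℝ → ℝ, Fk x' f = Fk x' f' := by
    intro x'
    funext k
    unfold Fk
    congr 1
    refine integral_congr_ae (hff'.mono fun y hy => ?_)
    show f y * _ = f' y * _
    rw [hy]
  have hft : ft f = ft f' := by
    funext p
    unfold ft
    congr 1
    refine integral_congr_ae (hff'.mono fun y hy => ?_)
    show f y * _ = f' y * _
    rw [hy]
  have hNoeq : No x f = No x f' := by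
    unfold No
    rw [hFk x]
  have hnormAeq : normA x f = normA x f' := by
    unfold normA
    rw [hFk x]
  have hgcl : gclhat x f = gclhat x f' := by
    funext k
    unfold gclhat
    rw [hFk x, hnormAeq]
  rw [hNoeq, hgcl, hFk x]
  apply stmt8_core x hxc hxm f' hf'm hf'
  · rw [← hft]; exact hfp
  · rw [← hft]; exact hfn
  · rw [← hNoeq]; exact hNo
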